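/- For a matroid M of rank 2 on ground set E, the basis-generating polynomial M(y) = Σ_{bases B} Π_{e∈B} y_e has the half-plane property: if Re(y_e) > 0 for all e ∈ E then M(y) ≠ 0. -/

import Mathlib

open Set

/-- Analytic key lemma: for complex numbers `s P` indexed by a finite set with at least two
elements, all with positive real part, the polynomial `e_2` type expression
`(∑ s P)^2 - ∑ (s P)^2` is nonzero. -/
lemma key_ineq {ι : Type*} (t : Finset ι) (s : ι → ℂ)
    (hpos : ∀ P ∈ t, 0 < (s P).re) (ht : 1 < t.card) :
    (∑ P ∈ t, s P) ^ 2 - ∑ P ∈ t, (s P) ^ 2 ≠ 0 := by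
  intro h0
  set T : ℂ := ∑ P ∈ t, s P with hT
  have hX : T.re = ∑ P ∈ t, (s P).re := Complex.re_sum t s
  have hmain : ((T ^ 2 - ∑ P ∈ t, (s P) ^ 2) * (starRingEnd ℂ) T).re
      = ∑ P ∈ t, ((s P).re * (T.re ^ 2 + T.im ^ 2)
          - (((s P).re ^ 2 - (s P).im ^ 2) * T.re + 2 * (s P).re * (s P).im * T.im)) := by
    rw [Finset.sum_sub_distrib]
    rw [sub_mul, Complex.sub_re, Finset.sum_mul]
    have h1 : (T ^ 2 * (starRingEnd ℂ) T).re = T.re * (T.re ^ 2 + T.im ^ 2) := by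
      rw [pow_two, Complex.mul_re, Complex.mul_re, Complex.mul_im, Complex.conj_re,
        Complex.conj_im]
      ring
    have h2 : ((∑ P ∈ t, (s P) ^ 2 * (starRingEnd ℂ) T)).re
        = ∑ P ∈ t, (((s P).re ^ 2 - (s P).im ^ 2) * T.re + 2 * (s P).re * (s P).im * T.im) := by
      rw [Complex.re_sum]
      refine Finset.sum_congr rfl fun P _ => ?_
      rw [pow_two, Complex.mul_re, Complex.mul_re, Complex.mul_im, Complex.conj_re,
        Complex.conj_im]
      ring
    rw [h1, h2, hX, ← Finset.sum_mul]
  have hpos' : 0 < ((T ^ 2 - ∑ P ∈ t, (s P) ^ 2) * (starRingEnd ℂ) T).re := by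
    rw [hmain]
    have hne : t.Nonempty := Finset.card_pos.mp (by omega)
    refine Finset.sum_pos (fun P hP => ?_) hne
    have hXP : 0 < (s P).re := hpos P hP
    have hsub : 0 < T.re - (s P).re := by
      classical
      have h := Finset.sum_erase_add t (fun Q => (s Q).re) hP
      have h2 : 0 < ∑ Q ∈ t.erase P, (s Q).re := by
        refine Finset.sum_pos (fun Q hQ => hpos Q (Finset.mem_of_mem_erase hQ)) ?_
        rw [← Finset.card_pos, Finset.card_erase_of_mem hP]
        omega
      rw [hX]
      linarith
    have hXpos : 0 < T.re := by linarith
    nlinarith [sq_nonneg (T.im - (s P).im), mul_nonneg hXP.le (sq_nonneg (T.im - (s P).im)),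
      mul_pos (mul_pos hXP hXpos) hsub, mul_nonneg hsub.le (sq_nonneg (s P).im)]
  rw [h0, zero_mul] at hpos'
  simp at hpos'

/-- In a rank-two matroid, any independent pair is a base. -/
lemma indep_pair_base {α : Type*} [Fintype α] {M : Matroid α}
    (hrank : ∀ B : Set α, M.IsBase B → B.ncard = 2)
    {a b : α} (hab : a ≠ b) (h : M.Indep {a, b}) : M.IsBase {a, b} := by
  obtain ⟨B, hB, hsub⟩ := h.exists_isBase_superset
  have : ({a, b} : Set α) = B :=
    Set.eq_of_subset_of_ncard_le hsub (by rw [hrank B hB, Set.ncard_pair hab]) (Set.toFinite B)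
  rwa [this]

/-- Parallelism is transitive through a nonloop in a rank-two matroid. -/
lemma dep_trans {α : Type*} [Fintype α] {M : Matroid α}
    (hrank : ∀ B : Set α, M.IsBase B → B.ncard = 2)
    {a b c : α} (hb : M.Indep {b}) (hab : ¬ M.Indep {a, b}) (hbc : ¬ M.Indep {b, c})
    (hac : M.Indep {a, c}) (hane : a ≠ c) : False := by
  have hBac : M.IsBase {a, c} := indep_pair_base hrank hane hac
  have hnb : ¬ M.IsBase {b} := fun h => by
    have := hrank _ h
    rw [Set.ncard_singleton] at this
    omega
  obtain ⟨e, he, hi⟩ := hb.exists_insert_of_not_isBase hnb hBac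
  have heac : e ∈ ({a, c} : Set α) := he.1
  rcases heac with rfl | rfl
  · exact hab hi
  · exact hbc (by rwa [Set.pair_comm] at hi)

theorem rank_two_half_plane_property {α : Type*} [Fintype α]
    (M : Matroid α) (hE : M.E = Set.univ)
    (hrank : ∀ B : Set α, M.IsBase B → B.ncard = 2)
    (y : α → ℂ) (hy : ∀ e : α, 0 < (y e).re) :
    (∑ᶠ B ∈ {B : Set α | M.IsBase B}, ∏ᶠ e ∈ B, y e) ≠ 0 := by
  classical
  -- the set of nonloops
  set U : Finset α := Finset.univ.filter (fun e => M.Indep {e}) with hU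
  have hUmem : ∀ e, e ∈ U ↔ M.Indep {e} := by
    intro e; simp [hU]
  -- the parallel relation
  set r : α → α → Prop := fun a b => a = b ∨ ¬ M.Indep {a, b} with hr
  have hrrefl : ∀ a, r a a := fun a => Or.inl rfl
  have hrsymm : ∀ a b, r a b → r b a := by
    intro a b h
    rcases h with h | h
    · exact Or.inl h.symm
    · exact Or.inr (by rwa [Set.pair_comm] at h)
  have hrtrans : ∀ x y z, M.Indep {y} → r x y → r y z → r x z := by
    intro x y z hy' hxy hyz
    rcases hxy with rfl | hxy
    · exact hyz
    rcases hyz with rfl | hyz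
    · exact Or.inr hxy
    by_cases hxz : x = z
    · exact Or.inl hxz
    · exact Or.inr fun hi => dep_trans hrank hy' hxy hyz hi hxz
  -- parallel classes
  set g : α → Finset α := fun a => U.filter (r a) with hgdef
  have hg_self : ∀ a ∈ U, a ∈ g a := by
    intro a ha
    simp only [hgdef, Finset.mem_filter]
    exact ⟨ha, hrrefl a⟩
  have hg_wd : ∀ a ∈ U, ∀ b ∈ U, r a b → g a = g b := by
    intro a ha b hb hab
    ext c
    simp only [hgdef, Finset.mem_filter]
    constructor
    · rintro ⟨hc, hac⟩
      exact ⟨hc, hrtrans b a c ((hUmem a).mp ha) (hrsymm a b hab) hac⟩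
    · rintro ⟨hc, hbc⟩
      exact ⟨hc, hrtrans a b c ((hUmem b).mp hb) hab hbc⟩
  set t : Finset (Finset α) := U.image g with ht
  set s : Finset α → ℂ := fun P => ∑ e ∈ P, y e with hs
  have hfiber : ∀ P ∈ t, U.filter (fun a => g a = P) = P := by
    intro P hP
    obtain ⟨a₀, ha₀, rfl⟩ := Finset.mem_image.mp hP
    ext c
    simp only [Finset.mem_filter]
    constructor
    · rintro ⟨hc, hgc⟩
      rw [← hgc]
      exact hg_self c hc
    · intro hc
      have hc' := hc
      simp only [hgdef, Finset.mem_filter] at hc'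
      exact ⟨hc'.1, (hg_wd a₀ ha₀ c hc'.1 hc'.2).symm⟩
  have hgP : ∀ P ∈ t, ∀ a ∈ P, g a = P := by
    intro P hP a ha
    have : a ∈ U.filter (fun a => g a = P) := by rw [hfiber P hP]; exact ha
    exact (Finset.mem_filter.mp this).2
  have Hpart : ∀ f : α → ℂ, ∑ a ∈ U, f a = ∑ P ∈ t, ∑ a ∈ P, f a := by
    intro f
    have hmap : ∀ a ∈ U, g a ∈ t := fun a ha => Finset.mem_image_of_mem g ha
    rw [← Finset.sum_fiberwise_of_maps_to hmap f]
    exact Finset.sum_congr rfl fun P hP => by rw [hfiber P hP]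
  -- positivity of class sums
  have hposcl : ∀ P ∈ t, 0 < (s P).re := by
    intro P hP
    obtain ⟨a₀, ha₀, rfl⟩ := Finset.mem_image.mp hP
    rw [hs]
    simp only [Complex.re_sum]
    exact Finset.sum_pos (fun e _ => hy e) ⟨a₀, hg_self a₀ ha₀⟩
  -- the sum over ordered non-parallel pairs equals T^2 - Q
  have hTQ : (∑ P ∈ t, s P) ^ 2 - ∑ P ∈ t, (s P) ^ 2
      = ∑ a ∈ U, ∑ b ∈ U.filter (fun b => ¬ r a b), y a * y b := by
    have h1 : (∑ P ∈ t, s P) ^ 2 = ∑ a ∈ U, ∑ b ∈ U, y a * y b := by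
      rw [← Hpart y, pow_two, Finset.sum_mul_sum]
    have h2 : ∑ P ∈ t, (s P) ^ 2 = ∑ a ∈ U, ∑ b ∈ U.filter (fun b => r a b), y a * y b := by
      have : ∑ a ∈ U, ∑ b ∈ U.filter (fun b => r a b), y a * y b
          = ∑ a ∈ U, y a * s (g a) := by
        refine Finset.sum_congr rfl fun a _ => ?_
        rw [hs, Finset.mul_sum]
      rw [this, Hpart (fun a => y a * s (g a))]
      refine Finset.sum_congr rfl fun P hP => ?_
      have hc : ∑ a ∈ P, y a * s (g a) = ∑ a ∈ P, y a * s P :=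
        Finset.sum_congr rfl fun a ha => by rw [hgP P hP a ha]
      rw [pow_two, hc, ← Finset.sum_mul]
    rw [h1, h2, ← Finset.sum_sub_distrib]
    refine Finset.sum_congr rfl fun a _ => ?_
    rw [← Finset.sum_filter_add_sum_filter_not U (fun b => r a b) (fun b => y a * y b)]
    ring
  -- nonvanishing of T^2 - Q
  have hcard : 1 < t.card := by
    obtain ⟨B, hB⟩ := M.exists_isBase
    obtain ⟨a, b, hab, rfl⟩ := Set.ncard_eq_two.mp (hrank B hB)
    have ha : a ∈ U := (hUmem a).mpr (hB.indep.subset (by simp))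
    have hb : b ∈ U := (hUmem b).mpr (hB.indep.subset (by simp))
    have hnr : ¬ r a b := by
      rintro (rfl | h)
      · exact hab rfl
      · exact h hB.indep
    refine Finset.one_lt_card.mpr ⟨g a, Finset.mem_image_of_mem g ha,
      g b, Finset.mem_image_of_mem g hb, fun h => hnr ?_⟩
    have : b ∈ g a := h ▸ hg_self b hb
    simp only [hgdef, Finset.mem_filter] at this
    exact this.2
  have hne0 : (∑ a ∈ U, ∑ b ∈ U.filter (fun b => ¬ r a b), y a * y b) ≠ 0 := by
    rw [← hTQ]
    exact key_ineq t s hposcl hcard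
  -- relate to the sum over bases
  have hfinB : {B : Set α | M.IsBase B}.Finite := Set.toFinite _
  rw [finsum_mem_eq_finite_toFinset_sum _ hfinB]
  set D : Finset (α × α) := (U ×ˢ U).filter (fun p => ¬ r p.1 p.2) with hD
  have hDsum : ∑ p ∈ D, y p.1 * y p.2
      = ∑ a ∈ U, ∑ b ∈ U.filter (fun b => ¬ r a b), y a * y b := by
    rw [hD, Finset.sum_filter, Finset.sum_product]
    exact Finset.sum_congr rfl fun a _ => (Finset.sum_filter _ _).symm
  have hmapD : ∀ p ∈ D, ({p.1, p.2} : Set α) ∈ hfinB.toFinset := by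
    intro p hp
    simp only [hD, Finset.mem_filter, Finset.mem_product] at hp
    obtain ⟨⟨h1, h2⟩, h3⟩ := hp
    have hne : p.1 ≠ p.2 := fun h => h3 (Or.inl h)
    have hind : M.Indep {p.1, p.2} := not_not.mp (fun h => h3 (Or.inr h))
    rw [Set.Finite.mem_toFinset]
    exact indep_pair_base hrank hne hind
  have hfib2 : ∀ B ∈ hfinB.toFinset,
      ∑ p ∈ D.filter (fun p => ({p.1, p.2} : Set α) = B), y p.1 * y p.2
        = 2 * ∏ᶠ e ∈ B, y e := by
    intro B hB'
    have hB : M.IsBase B := by rwa [Set.Finite.mem_toFinset] at hB'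
    obtain ⟨a, b, hab, rfl⟩ := Set.ncard_eq_two.mp (hrank B hB)
    have ha : a ∈ U := (hUmem a).mpr (hB.indep.subset (by simp))
    have hb : b ∈ U := (hUmem b).mpr (hB.indep.subset (by simp))
    have hnr : ¬ r a b := by
      rintro (rfl | h)
      · exact hab rfl
      · exact h hB.indep
    have hnr' : ¬ r b a := fun h => hnr (hrsymm b a h)
    have hfe : D.filter (fun p => ({p.1, p.2} : Set α) = ({a, b} : Set α))
        = {(a, b), (b, a)} := by
      ext p
      simp only [hD, Finset.mem_filter, Finset.mem_product, Finset.mem_insert,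
        Finset.mem_singleton]
      constructor
      · rintro ⟨⟨-, -⟩, hpeq⟩
        rcases Set.pair_eq_pair_iff.mp hpeq with ⟨h1, h2⟩ | ⟨h1, h2⟩
        · left; exact Prod.ext h1 h2
        · right; exact Prod.ext h1 h2
      · rintro (rfl | rfl)
        · exact ⟨⟨⟨ha, hb⟩, hnr⟩, rfl⟩
        · exact ⟨⟨⟨hb, ha⟩, hnr'⟩, Set.pair_comm b a⟩
    rw [hfe, Finset.sum_pair (by simp [hab] : ((a, b) : α × α) ≠ (b, a)),
      finprod_mem_pair hab]
    ring
  have hdouble : ∑ p ∈ D, y p.1 * y p.2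
      = 2 * ∑ B ∈ hfinB.toFinset, ∏ᶠ e ∈ B, y e := by
    rw [← Finset.sum_fiberwise_of_maps_to hmapD (fun p => y p.1 * y p.2)]
    rw [Finset.mul_sum]
    exact Finset.sum_congr rfl fun B hB' => hfib2 B hB'
  intro hzero
  rw [hzero, mul_zero] at hdouble
  rw [hDsum] at hdouble
  exact hne0 hdouble
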